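/- Let f(z) = ∑_{m≥1} (c_m/m) z^m be a formal power series over ℚ (or ℂ) with c_m the number of chains of m composable morphisms in a finite category I, and ζ_I(z) = exp(f(z)). Then the logarithmic derivative satisfies ζ_I'(z)/ζ_I(z) = sum(adj(E - A·z)·A)/det(E - A·z) as formal power series, where A is the adjacency matrix of I. -/

import Mathlib

open Polynomial Matrix PowerSeries

/-- The sum of all the entries of a matrix. -/
def sumEntries {R : Type*} [AddCommMonoid R] {N : ℕ} (M : Matrix (Fin N) (Fin N) R) : R :=
  ∑ i, ∑ j, M i j

/-- `det(E - A·z)`. -/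
noncomputable def detIsubAz {N : ℕ} (A : Matrix (Fin N) (Fin N) ℚ) : ℚ[X] :=
  ((1 : Matrix (Fin N) (Fin N) ℚ[X]) - (X : ℚ[X]) • A.map Polynomial.C).det

/-- `sum(adj(E - A·z)·A)`. -/
noncomputable def sumAdjIsubAzA {N : ℕ} (A : Matrix (Fin N) (Fin N) ℚ) : ℚ[X] :=
  sumEntries (adjugate ((1 : Matrix (Fin N) (Fin N) ℚ[X]) - (X : ℚ[X]) • A.map Polynomial.C) * A.map Polynomial.C)

section aux

variable {N : ℕ} (A : Matrix (Fin N) (Fin N) ℚ)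

/-- The matrix `A` viewed over power series. -/
noncomputable def Mmat : Matrix (Fin N) (Fin N) (PowerSeries ℚ) :=
  A.map (PowerSeries.C (R := ℚ))

/-- The matrix `E - A·z` over power series. -/
noncomputable def Bmat : Matrix (Fin N) (Fin N) (PowerSeries ℚ) :=
  1 - (PowerSeries.X : PowerSeries ℚ) • Mmat A

/-- The geometric series `∑ A^m z^m`, inverse of `Bmat A`. -/
noncomputable def Gmat : Matrix (Fin N) (Fin N) (PowerSeries ℚ) :=
  Matrix.of fun i j => PowerSeries.mk fun m => (A ^ m) i j

/-- The matrix `E - A·z` over polynomials. -/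
noncomputable def Bpmat : Matrix (Fin N) (Fin N) ℚ[X] :=
  (1 : Matrix (Fin N) (Fin N) ℚ[X]) - (X : ℚ[X]) • A.map Polynomial.C

lemma MG_apply (i j : Fin N) :
    (Mmat A * Gmat A) i j = PowerSeries.mk fun m => (A ^ (m + 1)) i j := by
  ext n
  simp only [Matrix.mul_apply, Mmat, Gmat, Matrix.map_apply, Matrix.of_apply, map_sum,
    PowerSeries.coeff_C_mul, PowerSeries.coeff_mk]
  rw [pow_succ']
  rw [Matrix.mul_apply]

lemma hBG : Bmat A * Gmat A = 1 := by
  have h : Bmat A * Gmat A = Gmat A - (PowerSeries.X : PowerSeries ℚ) • (Mmat A * Gmat A) := by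
    rw [Bmat, sub_mul, one_mul, smul_mul_assoc]
  rw [h]
  apply Matrix.ext; intro i j
  rw [Matrix.sub_apply, Matrix.smul_apply, MG_apply, smul_eq_mul]
  ext n
  rcases n with _ | n
  · simp only [map_sub, PowerSeries.coeff_zero_X_mul, sub_zero, Gmat, Matrix.of_apply,
      PowerSeries.coeff_mk, pow_zero]
    by_cases hij : i = j <;> simp [Matrix.one_apply, hij, PowerSeries.coeff_one]
  · simp only [map_sub, PowerSeries.coeff_succ_X_mul, Gmat, Matrix.of_apply,
      PowerSeries.coeff_mk]
    by_cases hij : i = j <;> simp [Matrix.one_apply, hij, PowerSeries.coeff_one]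

lemma adj_B_eq : adjugate (Bmat A) = (Bmat A).det • Gmat A := by
  calc adjugate (Bmat A) = adjugate (Bmat A) * (Bmat A * Gmat A) := by rw [hBG, mul_one]
    _ = (adjugate (Bmat A) * Bmat A) * Gmat A := by rw [mul_assoc]
    _ = ((Bmat A).det • (1 : Matrix (Fin N) (Fin N) (PowerSeries ℚ))) * Gmat A := by
        rw [Matrix.adjugate_mul]
    _ = (Bmat A).det • Gmat A := by rw [smul_mul_assoc, one_mul]

lemma hmapB : (Bpmat A).map (Polynomial.coeToPowerSeries.ringHom (R := ℚ)) = Bmat A := by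
  apply Matrix.ext; intro i j
  show Polynomial.coeToPowerSeries.ringHom ((Bpmat A) i j) = (Bmat A) i j
  simp only [Bpmat, Bmat, Mmat, Matrix.sub_apply, Matrix.smul_apply, Matrix.map_apply,
    smul_eq_mul, map_sub, _root_.map_mul, Polynomial.coeToPowerSeries.ringHom_apply,
    Polynomial.coe_X, Polynomial.coe_C]
  by_cases hij : i = j <;> simp [Matrix.one_apply, hij]

lemma hmapA : ((A.map Polynomial.C).map (Polynomial.coeToPowerSeries.ringHom (R := ℚ))) = Mmat A := by
  apply Matrix.ext; intro i j
  simp [Mmat, Matrix.map_apply, Polynomial.coeToPowerSeries.ringHom_apply, Polynomial.coe_C]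

end aux

/-- Let `c_m = sum(A^m)` be the number of chains of `m` composable morphisms in a finite
category with adjacency matrix `A`, and let `f(z) = ∑_{m≥1} (c_m/m) z^m`. If `ζ = exp(f)`
(characterized by `ζ(0) = 1` and `ζ' = f'·ζ`), then
`ζ'/ζ = sum(adj(E - A·z)·A)/det(E - A·z)` as formal power series. -/
theorem stmt17 {N : ℕ} (A : Matrix (Fin N) (Fin N) ℚ)
    (c : ℕ → ℚ) (hc : ∀ m, c m = sumEntries (A ^ m))
    (f : PowerSeries ℚ)
    (hf : f = PowerSeries.mk fun m => if m = 0 then 0 else c m / m)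
    (ζ : PowerSeries ℚ)
    -- `ζ = exp (f)`: the unique series with constant term `1` satisfying `ζ' = f'·ζ`
    (hζ0 : PowerSeries.constantCoeff ζ = 1)
    (hζ : ζ.derivativeFun = f.derivativeFun * ζ) :
    ζ.derivativeFun * ζ⁻¹
      = (sumAdjIsubAzA A : PowerSeries ℚ) * ((detIsubAz A : PowerSeries ℚ))⁻¹ := by
  have σ_def : ∀ p : ℚ[X], (p : PowerSeries ℚ) = Polynomial.coeToPowerSeries.ringHom p :=
    fun p => rfl
  -- coercion of determinant
  have hdet : (detIsubAz A : PowerSeries ℚ) = (Bmat A).det := by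
    rw [σ_def, detIsubAz, RingHom.map_det]
    exact congrArg Matrix.det (hmapB A)
  -- coercion of adjugate sum
  have hmul : (adjugate (Bpmat A) * A.map Polynomial.C).map (Polynomial.coeToPowerSeries.ringHom (R := ℚ))
      = adjugate (Bmat A) * Mmat A := by
    rw [Matrix.map_mul, ← RingHom.mapMatrix_apply, RingHom.map_adjugate,
      RingHom.mapMatrix_apply, hmapB, hmapA]
  have hsum : (sumAdjIsubAzA A : PowerSeries ℚ) = sumEntries (adjugate (Bmat A) * Mmat A) := by
    rw [σ_def, sumAdjIsubAzA, sumEntries, sumEntries]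
    simp only [map_sum]
    refine Finset.sum_congr rfl fun i _ => Finset.sum_congr rfl fun j _ => ?_
    calc Polynomial.coeToPowerSeries.ringHom
          ((adjugate ((1 : Matrix (Fin N) (Fin N) ℚ[X]) - (X : ℚ[X]) • A.map Polynomial.C) * A.map Polynomial.C) i j)
        = ((adjugate (Bpmat A) * A.map Polynomial.C).map
            (Polynomial.coeToPowerSeries.ringHom (R := ℚ))) i j := rfl
      _ = (adjugate (Bmat A) * Mmat A) i j := by rw [hmul]
  -- f' equals sumEntries (G * M)
  have hf' : f.derivativeFun = sumEntries (Gmat A * Mmat A) := by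
    ext n
    rw [show f.derivativeFun = PowerSeries.derivative ℚ f from rfl, PowerSeries.coeff_derivative, hf, PowerSeries.coeff_mk]
    simp only [Nat.succ_ne_zero, if_false]
    rw [sumEntries]
    simp only [map_sum]
    have hGM : ∀ i j : Fin N, (PowerSeries.coeff n) ((Gmat A * Mmat A) i j)
        = (A ^ (n + 1)) i j := by
      intro i j
      rw [Matrix.mul_apply]
      simp only [Gmat, Mmat, Matrix.of_apply, Matrix.map_apply, map_sum]
      have : ∀ k, (PowerSeries.coeff n) (PowerSeries.mk (fun m => (A ^ m) i k)
          * PowerSeries.C (R := ℚ) (A k j)) = (A ^ n) i k * A k j := by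
        intro k
        rw [mul_comm, PowerSeries.coeff_C_mul, PowerSeries.coeff_mk, mul_comm]
      simp only [this]
      rw [pow_succ, Matrix.mul_apply]
    simp only [hGM]
    rw [hc, sumEntries]
    have hne : ((n : ℚ) + 1) ≠ 0 := by positivity
    push_cast
    field_simp
  -- the key algebraic identity
  have hkey : f.derivativeFun * (detIsubAz A : PowerSeries ℚ)
      = (sumAdjIsubAzA A : PowerSeries ℚ) := by
    rw [hdet, hsum, adj_B_eq, smul_mul_assoc, hf', sumEntries, sumEntries]
    simp only [Matrix.smul_apply, smul_eq_mul, ← Finset.mul_sum]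
    exact mul_comm _ _
  -- constant coefficient of det is 1
  have hQ0 : PowerSeries.constantCoeff (detIsubAz A : PowerSeries ℚ) ≠ 0 := by
    rw [hdet]
    have h1 : (PowerSeries.constantCoeff) (Bmat A).det
        = ((Bmat A).map (PowerSeries.constantCoeff)).det := RingHom.map_det _ _
    have h2 : (Bmat A).map (PowerSeries.constantCoeff) = 1 := by
      apply Matrix.ext; intro i j
      simp only [Bmat, Mmat, Matrix.map_apply, Matrix.sub_apply, Matrix.smul_apply,
        smul_eq_mul, map_sub, _root_.map_mul, PowerSeries.constantCoeff_X, zero_mul, sub_zero]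
      by_cases hij : i = j <;> simp [Matrix.one_apply, hij]
    rw [h1, h2, Matrix.det_one]
    norm_num
  rw [hζ, mul_assoc, PowerSeries.mul_inv_cancel ζ (by rw [hζ0]; norm_num), mul_one]
  rw [← hkey, mul_assoc, PowerSeries.mul_inv_cancel _ hQ0, mul_one]
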